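/- For every x ∈ ℝⁿ, the curvature components satisfy R₍₃,₁,₁₎(x) = −e₄, R₍₁,₃,₁₎(x) = e₄, R₍₃,₁,₃₎(x) = e₂, R₍₁,₃,₃₎(x) = −e₂, and R₍ᵢ,ⱼ,ₖ₎(x) = 0 for every other triple (i,j,k). In particular, the curvature tensor of g₀ is nonzero at every point of ℝⁿ, so g₀ is not flat. -/

import Mathlib

/-- The `i`-th standard basis vector `eᵢ` of `ℝⁿ` (0-based). -/
def stdBasis (n : ℕ) (i : Fin n) : Fin n → ℝ := fun k => if k = i then 1 else 0

/-- The Christoffel vectors of `g₀`: `Γ₁₁(x) = -x₃ e₄`, `Γ₁₃(x) = Γ₃₁(x) = x₃ e₂`,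
and `Γᵢⱼ(x) = 0` otherwise (1-based indices; here `i j` are 0-based, so
`Γ₀₀(x) = -x₂e₃` and `Γ₀₂(x) = Γ₂₀(x) = x₂e₁`). -/
def Gamma (n : ℕ) (hn : 4 ≤ n) (i j : Fin n) (x : Fin n → ℝ) : Fin n → ℝ :=
  fun k =>
    if (i : ℕ) = 0 ∧ (j : ℕ) = 0 ∧ (k : ℕ) = 3 then -x ⟨2, by omega⟩
    else if (((i : ℕ) = 0 ∧ (j : ℕ) = 2) ∨ ((i : ℕ) = 2 ∧ (j : ℕ) = 0)) ∧ (k : ℕ) = 1 then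
      x ⟨2, by omega⟩
    else 0

/-- The curvature components
`R₍ᵢ,ⱼ,ₖ₎(x) = ∂ᵢΓⱼₖ(x) − ∂ⱼΓᵢₖ(x) + Σₘ (Γⱼₖ(x))ₘ Γᵢₘ(x) − Σₘ (Γᵢₖ(x))ₘ Γⱼₘ(x)`. -/
noncomputable def Rcurv (n : ℕ) (hn : 4 ≤ n) (i j k : Fin n) (x : Fin n → ℝ) :
    Fin n → ℝ :=
  fun l =>
    fderiv ℝ (fun y => Gamma n hn j k y l) x (stdBasis n i)
    - fderiv ℝ (fun y => Gamma n hn i k y l) x (stdBasis n j)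
    + ∑ m : Fin n, Gamma n hn j k x m * Gamma n hn i m x l
    - ∑ m : Fin n, Gamma n hn i k x m * Gamma n hn j m x l

lemma fderiv_gamma (n : ℕ) (hn : 4 ≤ n) (i j : Fin n) (x v : Fin n → ℝ) (l : Fin n) :
    fderiv ℝ (fun y => Gamma n hn i j y l) x v = Gamma n hn i j v l := by
  unfold Gamma
  split_ifs
  · rw [show (fun y : Fin n → ℝ => -y ⟨2, by omega⟩) = fun y => -(ContinuousLinearMap.proj (R := ℝ) (φ := fun _ : Fin n => ℝ) ⟨2, by omega⟩) y from rfl]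
    rw [fderiv_fun_neg]
    simp [ContinuousLinearMap.fderiv]
  · rw [show (fun y : Fin n → ℝ => y ⟨2, by omega⟩) = (ContinuousLinearMap.proj (R := ℝ) (φ := fun _ : Fin n => ℝ) ⟨2, by omega⟩) from rfl]
    simp [ContinuousLinearMap.fderiv]
  · simp

lemma gamma_sum_zero (n : ℕ) (hn : 4 ≤ n) (i j k : Fin n) (x : Fin n → ℝ) (l : Fin n) :
    ∑ m : Fin n, Gamma n hn j k x m * Gamma n hn i m x l = 0 := by
  apply Finset.sum_eq_zero
  intro m _
  rcases eq_or_ne (m : ℕ) 3 with h3 | h3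
  · have : Gamma n hn i m x l = 0 := by simp [Gamma, h3]
    simp [this]
  rcases eq_or_ne (m : ℕ) 1 with h1 | h1
  · have : Gamma n hn i m x l = 0 := by simp [Gamma, h1]
    simp [this]
  · have : Gamma n hn j k x m = 0 := by simp [Gamma, h3, h1]
    simp [this]

lemma rcurv_eq (n : ℕ) (hn : 4 ≤ n) (i j k : Fin n) (x : Fin n → ℝ) (l : Fin n) :
    Rcurv n hn i j k x l =
      Gamma n hn j k (stdBasis n i) l - Gamma n hn i k (stdBasis n j) l := by
  unfold Rcurv
  rw [fderiv_gamma, fderiv_gamma, gamma_sum_zero, gamma_sum_zero]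
  ring

/-- The only nonzero curvature components are (1-based) `R₍₃,₁,₁₎ = -e₄`,
`R₍₁,₃,₁₎ = e₄`, `R₍₃,₁,₃₎ = e₂`, `R₍₁,₃,₃₎ = -e₂` (here in 0-based indexing);
in particular the curvature is nonzero at every point, so `g₀` is not flat. -/
theorem curvature_components (n : ℕ) (hn : 4 ≤ n) (x : Fin n → ℝ) :
    Rcurv n hn ⟨2, by omega⟩ ⟨0, by omega⟩ ⟨0, by omega⟩ x = -stdBasis n ⟨3, by omega⟩ ∧
    Rcurv n hn ⟨0, by omega⟩ ⟨2, by omega⟩ ⟨0, by omega⟩ x = stdBasis n ⟨3, by omega⟩ ∧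
    Rcurv n hn ⟨2, by omega⟩ ⟨0, by omega⟩ ⟨2, by omega⟩ x = stdBasis n ⟨1, by omega⟩ ∧
    Rcurv n hn ⟨0, by omega⟩ ⟨2, by omega⟩ ⟨2, by omega⟩ x = -stdBasis n ⟨1, by omega⟩ ∧
    (∀ i j k : Fin n,
      ¬(((i : ℕ), (j : ℕ), (k : ℕ)) = (2, 0, 0) ∨
        ((i : ℕ), (j : ℕ), (k : ℕ)) = (0, 2, 0) ∨
        ((i : ℕ), (j : ℕ), (k : ℕ)) = (2, 0, 2) ∨
        ((i : ℕ), (j : ℕ), (k : ℕ)) = (0, 2, 2)) →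
      Rcurv n hn i j k x = 0) ∧
    (∃ i j k : Fin n, Rcurv n hn i j k x ≠ 0) := by
  have key : ∀ i j k : Fin n, ∀ l : Fin n, Rcurv n hn i j k x l =
      Gamma n hn j k (stdBasis n i) l - Gamma n hn i k (stdBasis n j) l :=
    fun i j k l => rcurv_eq n hn i j k x l
  refine ⟨?_, ?_, ?_, ?_, ?_, ?_⟩
  · funext l
    rw [key]
    simp only [Gamma, stdBasis, Fin.ext_iff, Pi.neg_apply]
    split_ifs <;> simp_all
  · funext l
    rw [key]
    simp only [Gamma, stdBasis, Fin.ext_iff]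
    split_ifs <;> simp_all
  · funext l
    rw [key]
    simp only [Gamma, stdBasis, Fin.ext_iff]
    split_ifs <;> simp_all
  · funext l
    rw [key]
    simp only [Gamma, stdBasis, Fin.ext_iff, Pi.neg_apply]
    split_ifs <;> simp_all
  · intro i j k h
    simp only [Prod.mk.injEq, not_or, not_and] at h
    funext l
    rw [key]
    simp only [Gamma, stdBasis, Fin.ext_iff, Pi.zero_apply]
    split_ifs <;> simp_all <;> omega
  · refine ⟨⟨2, by omega⟩, ⟨0, by omega⟩, ⟨0, by omega⟩, ?_⟩
    intro hc
    have := congrFun hc ⟨3, by omega⟩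
    rw [key] at this
    simp [Gamma, stdBasis, Fin.ext_iff] at this
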